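/- Let $p$ be an odd prime and $G$ the non-abelian group of order $p^3$ and exponent $p$. If a sequence $W$ over $G$ of length $p^3 + 3p - 3$ has at least $p^3 + 2p - 2$ terms lying in a fixed maximal subgroup $M$ of $G$ with $M \cong C_p \times C_p$, then $W$ has a product-one subsequence of length exactly $p^3$. -/

import Mathlib

open Multiset Pointwise

namespace Stmt13Aux

/-- Pull back a sub-multiset along a map. -/
lemma exists_le_of_le_map {α β : Type*} {f : α → β} :
    ∀ {t : Multiset β} {s : Multiset α}, t ≤ s.map f → ∃ u : Multiset α, u ≤ s ∧ u.map f = t := by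
  classical
  intro t
  induction t using Multiset.induction with
  | empty => exact fun _ => ⟨0, Multiset.zero_le _, rfl⟩
  | cons b t ih =>
    intro s h
    have hb : b ∈ s.map f := mem_of_le h (mem_cons_self _ _)
    obtain ⟨a, ha, rfl⟩ := mem_map.1 hb
    have h' : t ≤ (s.erase a).map f := by
      rw [map_erase_of_mem _ _ ha]
      have h2 := erase_le_erase (f a) h
      rwa [erase_cons_head] at h2
    obtain ⟨u, hu, hum⟩ := ih h'
    refine ⟨a ::ₘ u, ?_, by rw [map_cons, hum]⟩
    calc a ::ₘ u ≤ a ::ₘ s.erase a := cons_le_cons _ hu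
      _ = s := cons_erase ha

/-- Trim a multiset to a given smaller cardinality. -/
lemma exists_le_card_eq {α : Type*} {s : Multiset α} {n : ℕ} (h : n ≤ card s) :
    ∃ t ≤ s, card t = n := by
  refine ⟨↑(s.toList.take n), ?_, ?_⟩
  · calc (↑(s.toList.take n) : Multiset α) ≤ ↑s.toList := by
          exact coe_le.mpr (s.toList.take_sublist n).subperm
      _ = s := coe_toList s
  · simp only [coe_card, List.length_take]
    rw [Multiset.length_toList]
    omega

/-- A product of elements of an ideal lies in the corresponding power of the ideal. -/
lemma multiset_prod_mem_pow {A : Type*} [CommRing A] (I : Ideal A) :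
    ∀ (s : Multiset A), (∀ x ∈ s, x ∈ I) → s.prod ∈ I ^ (card s) := by
  intro s
  induction s using Multiset.induction with
  | empty => intro _; simp
  | cons a s ih =>
    intro h
    rw [prod_cons, card_cons, pow_succ']
    exact Ideal.mul_mem_mul (h a (mem_cons_self _ _)) (ih fun x hx => h x (mem_cons_of_mem hx))

/-- Powers of a span of three nilpotents vanish. -/
lemma span_three_pow_eq_bot {A : Type*} [CommRing A] (x y z : A) (a b c : ℕ)
    (hx : x ^ a = 0) (hy : y ^ b = 0) (hz : z ^ c = 0) {n : ℕ} (hn : a + b + c ≤ n + 2) :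
    (Ideal.span {x, y, z} : Ideal A) ^ n = ⊥ := by
  have key : ∀ m : ℕ, (Ideal.span {x, y, z} : Ideal A) ^ m ≤
      Ideal.span {t | ∃ i j k, i + j + k = m ∧ t = x ^ i * y ^ j * z ^ k} := by
    intro m
    induction m with
    | zero =>
      rw [pow_zero, Ideal.one_eq_top]
      have h1 : (1 : A) ∈ Ideal.span {t | ∃ i j k, i + j + k = 0 ∧ t = x ^ i * y ^ j * z ^ k} :=
        Ideal.subset_span ⟨0, 0, 0, rfl, by simp⟩
      intro u _
      simpa using Ideal.mul_mem_left _ u h1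
    | succ m ihm =>
      rw [pow_succ]
      calc (Ideal.span {x, y, z} : Ideal A) ^ m * Ideal.span {x, y, z}
          ≤ Ideal.span {t | ∃ i j k, i + j + k = m ∧ t = x ^ i * y ^ j * z ^ k} *
            Ideal.span {x, y, z} := Ideal.mul_mono ihm le_rfl
        _ = Ideal.span ({t | ∃ i j k, i + j + k = m ∧ t = x ^ i * y ^ j * z ^ k} * {x, y, z}) := by
            rw [Ideal.span_mul_span']
        _ ≤ Ideal.span {t | ∃ i j k, i + j + k = m + 1 ∧ t = x ^ i * y ^ j * z ^ k} := by
            apply Ideal.span_le.2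
            rintro u ⟨s, ⟨i, j, k, hijk, rfl⟩, g, hg, rfl⟩
            rcases hg with rfl | rfl | rfl
            · exact Ideal.subset_span ⟨i + 1, j, k, by omega, by ring⟩
            · exact Ideal.subset_span ⟨i, j + 1, k, by omega, by ring⟩
            · exact Ideal.subset_span ⟨i, j, k + 1, by omega, by ring⟩
  have h0 : ∀ t ∈ {t | ∃ i j k, i + j + k = n ∧ t = x ^ i * y ^ j * z ^ k}, t = (0 : A) := by
    rintro t ⟨i, j, k, hijk, rfl⟩
    have : a ≤ i ∨ b ≤ j ∨ c ≤ k := by omega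
    rcases this with h | h | h
    · rw [show i = a + (i - a) by omega, pow_add, hx]; ring
    · rw [show j = b + (j - b) by omega, pow_add, hy]; ring
    · rw [show k = c + (k - c) by omega, pow_add, hz]; ring
  refine le_bot_iff.1 ((key n).trans (Ideal.span_le.2 fun t ht => ?_))
  rw [h0 t ht]
  exact Submodule.zero_mem ⊥

section GroupAlg

variable (p : ℕ) [hpf : Fact p.Prime]

abbrev Hgrp := ZMod p × ZMod p × ZMod (p ^ 2)

abbrev Rg := AddMonoidAlgebra (ZMod p) (Hgrp p)

noncomputable def dlt (h : Hgrp p) : Rg p := AddMonoidAlgebra.single h 1 - 1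

noncomputable def Jid : Ideal (Rg p) :=
  Ideal.span {dlt p (1,0,0), dlt p (0,1,0), dlt p (0,0,1)}

variable {p}

lemma dlt_zero : dlt p (0 : Hgrp p) = 0 := by
  unfold dlt; rw [← AddMonoidAlgebra.one_def]; ring

lemma dlt_add (a b : Hgrp p) : dlt p (a + b) = dlt p a * dlt p b + dlt p a + dlt p b := by
  unfold dlt
  rw [show (AddMonoidAlgebra.single (a + b) (1 : ZMod p)) =
      AddMonoidAlgebra.single a 1 * AddMonoidAlgebra.single b 1 by
    rw [AddMonoidAlgebra.single_mul_single, one_mul]]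
  ring

lemma dlt_mem_add {a b : Hgrp p} (ha : dlt p a ∈ Jid p) (hb : dlt p b ∈ Jid p) :
    dlt p (a + b) ∈ Jid p := by
  rw [dlt_add]
  exact add_mem (add_mem (Ideal.mul_mem_right _ _ ha) ha) hb

lemma dlt_nsmul_mem {a : Hgrp p} (ha : dlt p a ∈ Jid p) (n : ℕ) : dlt p (n • a) ∈ Jid p := by
  induction n with
  | zero => rw [zero_smul, dlt_zero]; exact zero_mem _
  | succ n ih => rw [succ_nsmul]; exact dlt_mem_add ih ha

lemma dlt_mem (h : Hgrp p) : dlt p h ∈ Jid p := by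
  have h1 : h = h.1.val • ((1 : ZMod p), (0 : ZMod p), (0 : ZMod (p ^ 2)))
      + (h.2.1.val • ((0 : ZMod p), (1 : ZMod p), (0 : ZMod (p ^ 2)))
      + h.2.2.val • ((0 : ZMod p), (0 : ZMod p), (1 : ZMod (p ^ 2)))) := by
    ext
    · simp [ZMod.natCast_val, ZMod.cast_id]
    · simp [ZMod.natCast_val, ZMod.cast_id]
    · simp [ZMod.natCast_val, ZMod.cast_id]
  have m1 : dlt p ((1 : ZMod p), (0 : ZMod p), (0 : ZMod (p ^ 2))) ∈ Jid p :=
    Ideal.subset_span (by simp)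
  have m2 : dlt p ((0 : ZMod p), (1 : ZMod p), (0 : ZMod (p ^ 2))) ∈ Jid p :=
    Ideal.subset_span (by simp)
  have m3 : dlt p ((0 : ZMod p), (0 : ZMod p), (1 : ZMod (p ^ 2))) ∈ Jid p :=
    Ideal.subset_span (by simp)
  rw [h1]
  exact dlt_mem_add (dlt_nsmul_mem m1 _) (dlt_mem_add (dlt_nsmul_mem m2 _) (dlt_nsmul_mem m3 _))

lemma charP_Rg : CharP (Rg p) p := charP_of_injective_algebraMap' (ZMod p) (A := Rg p) p

lemma dlt_pow1 : dlt p ((1 : ZMod p), (0 : ZMod p), (0 : ZMod (p ^ 2))) ^ p = 0 := by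
  haveI := charP_Rg (p := p)
  unfold dlt
  rw [sub_pow_char, one_pow, AddMonoidAlgebra.single_pow, one_pow]
  rw [show p • ((1 : ZMod p), (0 : ZMod p), (0 : ZMod (p ^ 2))) = (0 : Hgrp p) by
    ext <;> simp]
  rw [← AddMonoidAlgebra.one_def]; ring

lemma dlt_pow2 : dlt p ((0 : ZMod p), (1 : ZMod p), (0 : ZMod (p ^ 2))) ^ p = 0 := by
  haveI := charP_Rg (p := p)
  unfold dlt
  rw [sub_pow_char, one_pow, AddMonoidAlgebra.single_pow, one_pow]
  rw [show p • ((0 : ZMod p), (1 : ZMod p), (0 : ZMod (p ^ 2))) = (0 : Hgrp p) by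
    ext <;> simp]
  rw [← AddMonoidAlgebra.one_def]; ring

lemma dlt_pow3 : dlt p ((0 : ZMod p), (0 : ZMod p), (1 : ZMod (p ^ 2))) ^ (p ^ 2) = 0 := by
  haveI := charP_Rg (p := p)
  unfold dlt
  rw [sub_pow_char_pow, one_pow, AddMonoidAlgebra.single_pow, one_pow]
  rw [show (p ^ 2) • ((0 : ZMod p), (0 : ZMod p), (1 : ZMod (p ^ 2))) = (0 : Hgrp p) by
    ext <;> simp]
  rw [← AddMonoidAlgebra.one_def]; ring

lemma jid_pow_eq_bot : (Jid p) ^ (p ^ 2 + 2 * p - 2) = ⊥ := by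
  apply span_three_pow_eq_bot _ _ _ p p (p ^ 2) dlt_pow1 dlt_pow2 dlt_pow3
  have h2 : 2 ≤ p := hpf.out.two_le
  have h4 : 4 ≤ p ^ 2 := by
    calc (4 : ℕ) = 2 ^ 2 := rfl
    _ ≤ p ^ 2 := Nat.pow_le_pow_left h2 2
  set q := p ^ 2 with hq
  omega

variable (p)

noncomputable def fac (a : Hgrp p) : Rg p := 1 - AddMonoidAlgebra.single a 1

noncomputable def Pprod (S : Multiset (Hgrp p)) : Rg p := (S.map (fac p)).prod

variable {p}

lemma Pprod_zero : Pprod p (0 : Multiset (Hgrp p)) = 1 := by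
  unfold Pprod; simp

lemma Pprod_cons (a : Hgrp p) (S : Multiset (Hgrp p)) :
    Pprod p (a ::ₘ S) = fac p a * Pprod p S := by
  unfold Pprod; rw [map_cons, prod_cons]

lemma prod_dlt_eq_zero (S : Multiset (Hgrp p)) (hS : p ^ 2 + 2 * p - 2 ≤ card S) :
    Pprod p S = 0 := by
  have hmem : ∀ x ∈ S.map (fac p), x ∈ Jid p := by
    intro x hx
    obtain ⟨a, _, rfl⟩ := mem_map.1 hx
    have h1 : fac p a = -(dlt p a) := by unfold fac dlt; ring
    rw [h1]
    exact neg_mem (dlt_mem a)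
  have h1 := multiset_prod_mem_pow _ _ hmem
  rw [card_map] at h1
  have h2 := (Ideal.pow_le_pow_right hS) h1
  rw [jid_pow_eq_bot] at h2
  exact (Submodule.mem_bot _).1 h2

lemma coeff_prod (S : Multiset (Hgrp p)) :
    ∀ (g : Hgrp p), (∀ T, T ≤ S → T.sum = g → T = 0 ∧ g = 0) →
    (Pprod p S).coeff g = if g = 0 then 1 else 0 := by
  induction S using Multiset.induction with
  | empty =>
    intro g _
    rw [Pprod_zero, AddMonoidAlgebra.one_def, AddMonoidAlgebra.coeff_single, Finsupp.single_apply]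
    by_cases h : g = 0 <;> simp [h, eq_comm]
  | cons a S ih =>
    intro g hg
    have hfac : (Pprod p (a ::ₘ S)).coeff g = (Pprod p S).coeff g - (Pprod p S).coeff (-a + g) := by
      rw [Pprod_cons]
      unfold fac
      rw [sub_mul, one_mul, AddMonoidAlgebra.coeff_sub, Finsupp.sub_apply, AddMonoidAlgebra.coeff_single_mul_apply, one_mul]
    have h1 : (Pprod p S).coeff g = if g = 0 then 1 else 0 :=
      ih g (fun T hT hs => hg T (hT.trans (le_cons_self S a)) hs)
    have h2 : (Pprod p S).coeff (-a + g) = if -a + g = 0 then 1 else 0 := by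
      refine ih (-a + g) (fun T hT hs => ?_)
      exfalso
      have hc : (a ::ₘ T) ≤ a ::ₘ S := cons_le_cons _ hT
      have hsum : (a ::ₘ T).sum = g := by rw [sum_cons, hs, add_neg_cancel_left]
      exact cons_ne_zero (hg _ hc hsum).1
    have h3 : -a + g ≠ 0 := by
      intro h0
      have hga : g = a := by
        have := congrArg (a + ·) h0
        simpa [add_neg_cancel_left] using this
      have hc : (a ::ₘ (0 : Multiset (Hgrp p))) ≤ a ::ₘ S := cons_le_cons _ (Multiset.zero_le _)
      have hsum : (a ::ₘ (0 : Multiset (Hgrp p))).sum = g := by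
        rw [sum_cons, sum_zero, add_zero, hga]
      exact cons_ne_zero (hg _ hc hsum).1
    rw [hfac, h1, h2, if_neg h3, sub_zero]

lemma exists_zero_sum_H (S : Multiset (Hgrp p)) (hS : p ^ 2 + 2 * p - 2 ≤ card S) :
    ∃ T, T ≤ S ∧ T ≠ 0 ∧ T.sum = 0 := by
  by_contra hc
  push_neg at hc
  have hclaim := coeff_prod S 0 (fun T hT hs => ⟨by
    by_contra hne
    exact (hc T hT hne) hs, rfl⟩)
  rw [prod_dlt_eq_zero S hS] at hclaim
  simp at hclaim


variable (p)

abbrev Vgrp := ZMod p × ZMod p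

def toH (v : Vgrp p) : Hgrp p := (v.1, v.2, 1)

variable {p}

lemma toH_sum (T : Multiset (Vgrp p)) :
    (T.map (toH p)).sum = (T.sum.1, T.sum.2, (card T : ZMod (p ^ 2))) := by
  induction T using Multiset.induction with
  | empty => simp [toH]; rfl
  | cons a T ih =>
    rw [map_cons, sum_cons, sum_cons, card_cons, ih]
    show ((a.1, a.2, (1 : ZMod (p ^ 2))) : Hgrp p) + _ = _
    rw [Prod.ext_iff, Prod.ext_iff]
    refine ⟨by simp, by simp, ?_⟩
    show (1 : ZMod (p ^ 2)) + (card T : ZMod (p ^ 2)) = ((card T + 1 : ℕ) : ZMod (p ^ 2))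
    push_cast
    ring

lemma exists_zero_sum_sq (S : Multiset (Vgrp p)) (hS : p ^ 2 + 2 * p - 2 ≤ card S) :
    ∃ T, T ≤ S ∧ card T = p ^ 2 ∧ T.sum = 0 := by
  obtain ⟨S₀, hS₀le, hS₀card⟩ := exists_le_card_eq hS
  obtain ⟨T', hT'le, hT'ne, hT'sum⟩ :=
    exists_zero_sum_H (S₀.map (toH p)) (by rw [card_map, hS₀card])
  obtain ⟨T, hTle, hTmap⟩ := exists_le_of_le_map hT'le
  have hsum := toH_sum (p := p) T
  rw [hTmap, hT'sum] at hsum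
  have hcomp : T.sum.1 = 0 ∧ T.sum.2 = 0 ∧ ((card T : ZMod (p ^ 2)) = 0) := by
    have e := hsum.symm
    rw [show (0 : Hgrp p) = ((0 : ZMod p), (0 : ZMod p), (0 : ZMod (p ^ 2))) from rfl,
      Prod.mk.injEq, Prod.mk.injEq] at e
    exact ⟨e.1, e.2.1, e.2.2⟩
  obtain ⟨e1, e2, e3⟩ := hcomp
  haveI : NeZero (p ^ 2) := ⟨pow_ne_zero _ hpf.out.ne_zero⟩
  have hdvd : p ^ 2 ∣ card T := (ZMod.natCast_eq_zero_iff _ _).1 e3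
  have hne : card T ≠ 0 := by
    intro h
    apply hT'ne
    rw [← hTmap, Multiset.card_eq_zero.1 h]
    simp
  have hle : card T ≤ p ^ 2 + 2 * p - 2 := by
    rw [← hS₀card]; exact card_le_card hTle
  have h2 : 2 ≤ p := hpf.out.two_le
  have h4 : 4 ≤ p ^ 2 := by
    calc (4 : ℕ) = 2 ^ 2 := rfl
    _ ≤ p ^ 2 := Nat.pow_le_pow_left h2 2
  have hplt : 2 * p ≤ p ^ 2 := by
    rw [pow_two]
    exact Nat.mul_le_mul_right p h2
  have hle' : card T + 2 ≤ p ^ 2 + 2 * p := by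
    set q := p ^ 2
    omega
  have hcard : card T = p ^ 2 := by
    obtain ⟨k, hk⟩ := hdvd
    have hk1 : k ≠ 0 := by
      rintro rfl
      rw [mul_zero] at hk
      exact hne hk
    have hk2 : k < 2 := by
      by_contra hk2c
      push_neg at hk2c
      have hmul : p ^ 2 * 2 ≤ p ^ 2 * k := Nat.mul_le_mul_left _ hk2c
      rw [← hk] at hmul
      nlinarith [hmul, hle', hplt]
    have hk3 : k = 1 := by omega
    rw [hk3, mul_one] at hk
    exact hk
  refine ⟨T, hTle.trans hS₀le, hcard, ?_⟩
  have hts : T.sum = (T.sum.1, T.sum.2) := rfl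
  rw [hts, e1, e2]
  rfl

lemma blocks : ∀ (k : ℕ) (S : Multiset (Vgrp p)),
    p ^ 2 + 2 * p - 2 + p ^ 2 * k ≤ card S →
    ∃ U, U ≤ S ∧ card U = p ^ 2 * (k + 1) ∧ U.sum = 0 := by
  intro k
  induction k with
  | zero =>
    intro S hS
    rw [mul_zero, add_zero] at hS
    obtain ⟨T, h1, h2, h3⟩ := exists_zero_sum_sq S hS
    exact ⟨T, h1, by rw [zero_add, mul_one]; exact h2, h3⟩
  | succ k ih =>
    intro S hS
    obtain ⟨B, hB, hBcard, hBsum⟩ :=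
      exists_zero_sum_sq S (le_trans (Nat.le_add_right _ _) hS)
    have hcard' : p ^ 2 + 2 * p - 2 + p ^ 2 * k ≤ card (S - B) := by
      rw [card_sub hB, hBcard]
      have hmul : p ^ 2 * (k + 1) = p ^ 2 * k + p ^ 2 := by ring
      set q := p ^ 2
      set A := q * k
      rw [hmul] at hS
      omega
    obtain ⟨U', hU', hU'card, hU'sum⟩ := ih (S - B) hcard'
    refine ⟨B + U', ?_, ?_, ?_⟩
    · rw [le_iff_count]; intro a
      have h1 := count_le_of_le a hB
      have h2 := count_le_of_le a hU'
      rw [count_sub] at h2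
      rw [count_add]
      omega
    · rw [card_add, hBcard, hU'card]; ring
    · rw [Multiset.sum_add, hBsum, hU'sum, add_zero]

end GroupAlg

end Stmt13Aux

open Stmt13Aux in
theorem stmt_13 (p : ℕ) (hp : p.Prime) (hodd : Odd p)
    {G : Type*} [Group G] [Fintype G]
    (hcard : Fintype.card G = p ^ 3)
    (hexp : Monoid.exponent G = p)
    (hna : ∃ a b : G, a * b ≠ b * a)
    (M : Subgroup G) (hMmax : IsCoatom M)
    (hMiso : Nonempty (M ≃* (Multiplicative (ZMod p) × Multiplicative (ZMod p))))
    (W : Multiset G) (hlen : Multiset.card W = p ^ 3 + 3 * p - 3)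
    (hM : ∃ T : Multiset G, T ≤ W ∧ p ^ 3 + 2 * p - 2 ≤ Multiset.card T ∧
      ∀ t ∈ T, t ∈ M) :
    ∃ l : List G, (l : Multiset G) ≤ W ∧ l.length = p ^ 3 ∧ l.prod = 1 := by
  classical
  haveI hpf : Fact p.Prime := ⟨hp⟩
  obtain ⟨T, hTW, hTcard, hTM⟩ := hM
  obtain ⟨e⟩ := hMiso
  letI : CommGroup ↥M :=
    { (inferInstance : Group ↥M) with
      mul_comm := fun a b => e.injective (by rw [map_mul, map_mul, mul_comm]) }
  set ψ : ↥M → Vgrp p := fun m => ((e m).1.toAdd, (e m).2.toAdd) with hψdef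
  have hψ1 : ψ 1 = 0 := by simp [hψdef]
  have hψmul : ∀ a b : ↥M, ψ (a * b) = ψ a + ψ b := by
    intro a b
    simp [hψdef, Prod.ext_iff]
  have hψinj : ∀ m : ↥M, ψ m = 0 → m = 1 := by
    intro m hm
    rw [Prod.mk.injEq] at hm
    apply e.injective
    rw [map_one]
    apply Prod.ext
    · rw [← ofAdd_toAdd ((e m).1), hm.1]; rfl
    · rw [← ofAdd_toAdd ((e m).2), hm.2]; rfl
  set T' : Multiset ↥M := T.attach.map (fun x => (⟨x.1, hTM x.1 x.2⟩ : ↥M)) with hT'def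
  have hT'map : T'.map (fun m : ↥M => (m : G)) = T := by
    simp [hT'def]
  have hT'card : Multiset.card T' = Multiset.card T := by
    rw [hT'def, Multiset.card_map, Multiset.card_attach]
  have h2 : 2 ≤ p := hp.two_le
  have hbig : p ^ 2 + 2 * p - 2 + p ^ 2 * (p - 1) ≤ Multiset.card (T'.map ψ) := by
    rw [Multiset.card_map, hT'card]
    refine le_trans (le_of_eq ?_) hTcard
    have ha : 2 ≤ p ^ 2 + 2 * p := by nlinarith
    have hb : 1 ≤ p := hp.pos
    have hc : 2 ≤ p ^ 3 + 2 * p := by nlinarith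
    zify [ha, hb, hc]
    ring
  obtain ⟨U, hUle, hUcard, hUsum⟩ := blocks (p - 1) (T'.map ψ) hbig
  have hUcard' : Multiset.card U = p ^ 3 := by
    have h1 : p - 1 + 1 = p := by omega
    rw [hUcard, h1, ← pow_succ]
  obtain ⟨U', hU'le, hU'map⟩ := exists_le_of_le_map hUle
  have hsum : ∀ (u : Multiset ↥M), (u.map ψ).sum = ψ u.prod := by
    intro u
    induction u using Multiset.induction with
    | empty => simp [hψ1]
    | cons a u ih => rw [Multiset.map_cons, Multiset.sum_cons, Multiset.prod_cons, hψmul, ih]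
  have hprod1 : U'.prod = 1 := by
    apply hψinj
    rw [← hsum, hU'map, hUsum]
  refine ⟨(U'.toList.map (fun m : ↥M => (m : G))), ?_, ?_, ?_⟩
  · rw [← Multiset.map_coe, Multiset.coe_toList]
    calc U'.map (fun m : ↥M => (m : G)) ≤ T'.map (fun m : ↥M => (m : G)) :=
          Multiset.map_le_map hU'le
      _ = T := hT'map
      _ ≤ W := hTW
  · rw [List.length_map, Multiset.length_toList]
    have hcc : Multiset.card U' = Multiset.card U := by rw [← hU'map, Multiset.card_map]
    rw [hcc, hUcard']
  · calc (List.map (fun m : ↥M => (m : G)) U'.toList).prod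
        = M.subtype U'.toList.prod := List.prod_hom _ M.subtype
      _ = 1 := by rw [Multiset.prod_toList, hprod1, map_one]
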